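/- Let F be the free group on two generators u, v, acting on ℓ²(F) by the left regular representation. Then α(F, {u,v}) > 0; in fact for every unit vector f ∈ ℓ²(F), max{‖u·f − f‖, ‖v·f − f‖} ≥ some explicit positive constant (e.g. one may take the constant (2 − √3)^{1/2} or any positive lower bound). -/

import Mathlib

/-- Displacement of f by x in the left regular representation:
‖x·f − f‖ where (x·f)(g) = f(x⁻¹g). -/
noncomputable def disp {G : Type*} [Group G] (x : G) (f : G → ℝ) : ℝ :=
  Real.sqrt (∑' g, (f (x⁻¹ * g) - f g) ^ 2)

namespace FGAux
open FreeGroup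

lemma sq_norm_rpow (y : ℝ) : ‖y‖ ^ ((2 : ENNReal)).toReal = y ^ 2 := by
  rw [ENNReal.toReal_ofNat, show ((2:ℝ)) = ((2:ℕ):ℝ) by norm_num, Real.rpow_natCast]
  simp [sq_abs]

lemma rev_tri {ι : Type*} (a b : ι → ℝ) (ha : Summable fun i => a i ^ 2)
    (hb : Summable fun i => b i ^ 2) :
    Real.sqrt (∑' i, a i ^ 2) - Real.sqrt (∑' i, b i ^ 2)
      ≤ Real.sqrt (∑' i, (a i - b i) ^ 2) := by
  have hma : Memℓp a 2 := memℓp_gen (by simpa [sq_norm_rpow] using ha)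
  have hmb : Memℓp b 2 := memℓp_gen (by simpa [sq_norm_rpow] using hb)
  set A : lp (fun _ : ι => ℝ) 2 := ⟨a, hma⟩ with hA
  set B : lp (fun _ : ι => ℝ) 2 := ⟨b, hmb⟩ with hB
  have hp : 0 < (2 : ENNReal).toReal := by norm_num
  have hnorm : ∀ C : lp (fun _ : ι => ℝ) 2, ‖C‖ = Real.sqrt (∑' i, (C i) ^ 2) := by
    intro C
    rw [lp.norm_eq_tsum_rpow hp, Real.sqrt_eq_rpow]
    rw [show (∑' i, ‖C i‖ ^ (2:ENNReal).toReal) = ∑' i, (C i) ^ 2 from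
      tsum_congr fun i => sq_norm_rpow _]
    norm_num
  have key := norm_sub_norm_le A B
  rw [hnorm A, hnorm B, hnorm (A - B)] at key
  have hABc : ∀ i, (A - B) i = a i - b i := by
    intro i
    rw [lp.coeFn_sub]
    rfl
  have : (∑' i, ((A - B) i) ^ 2) = ∑' i, (a i - b i) ^ 2 := tsum_congr fun i => by rw [hABc]
  rw [this] at key
  exact key

lemma disp_inv {G : Type*} [Group G] (x : G) (f : G → ℝ) : disp x⁻¹ f = disp x f := by
  simp only [disp, inv_inv]
  congr 1
  have h := (Equiv.mulLeft x⁻¹).tsum_eq (fun g => (f (x * g) - f g) ^ 2)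
  have h2 : ∀ g : G, (f (x * ((Equiv.mulLeft x⁻¹) g)) - f ((Equiv.mulLeft x⁻¹) g)) ^ 2
      = (f (x⁻¹ * g) - f g) ^ 2 := by
    intro g
    have : x * ((Equiv.mulLeft x⁻¹) g) = g := by simp
    rw [this, show ((Equiv.mulLeft x⁻¹) g : G) = x⁻¹ * g from rfl]
    ring
  calc ∑' g, (f (x * g) - f g) ^ 2
      = ∑' g, (f (x * ((Equiv.mulLeft x⁻¹) g)) - f ((Equiv.mulLeft x⁻¹) g)) ^ 2 := h.symm
    _ = ∑' g, (f (x⁻¹ * g) - f g) ^ 2 := tsum_congr h2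

def letterOf (g : FreeGroup Bool) : Option (Bool × Bool) := g.toWord.head?

def xl (l : Bool × Bool) : FreeGroup Bool := FreeGroup.mk [l]

lemma key (l : Bool × Bool) (h : FreeGroup Bool) :
    letterOf (xl l * h) = some l ↔ ¬ letterOf h = some (l.1, !l.2) := by
  have hmul : (xl l * h).toWord = reduce (l :: h.toWord) := by
    conv_lhs => rw [← mk_toWord (x := h)]
    rw [xl, FreeGroup.mul_mk, toWord_mk]
    rfl
  rw [letterOf, letterOf, hmul, reduce.cons, h.reduce_toWord]
  cases hw : h.toWord with
  | nil => simp
  | cons hd tl =>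
    have hred : reduce (hd :: tl) = hd :: tl := by rw [← hw]; exact h.reduce_toWord
    by_cases hc : l.1 = hd.1 ∧ l.2 = !hd.2
    · have hhd : hd = (l.1, !l.2) := by
        obtain ⟨h1, h2⟩ := hc
        have : hd.2 = !l.2 := by rw [h2, Bool.not_not]
        exact Prod.ext h1.symm this
      simp only [hc, if_true]
      have htl : tl.head? ≠ some l := by
        intro hh
        cases tl with
        | nil => simp at hh
        | cons t0 tl' =>
          have ht0 : t0 = l := by simpa using hh
          apply reduce.not (L₁ := hd :: t0 :: tl') (L₂ := []) (L₃ := tl')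
            (x := l.1) (b := !l.2)
          rw [hred, hhd, ht0]
          simp [Bool.not_not]
      simp [htl, hhd]
    · simp only [hc, if_false]
      have hhd : hd ≠ (l.1, !l.2) := by
        intro hh
        apply hc
        rw [hh]
        simp [Bool.not_not]
      simp [hhd, Ne.symm]

def Al (l : Bool × Bool) : Set (FreeGroup Bool) := {g | letterOf g = some l}

def shiftEquiv (l : Bool × Bool) : Al l ≃ ((Al (l.1, !l.2))ᶜ : Set (FreeGroup Bool)) where
  toFun g := ⟨(xl l)⁻¹ * g, by
    have hk := key l ((xl l)⁻¹ * g.1)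
    rw [mul_inv_cancel_left] at hk
    exact hk.mp g.2⟩
  invFun h := ⟨xl l * h, (key l h).mpr h.2⟩
  left_inv g := by
    apply Subtype.ext
    simp
  right_inv h := by
    apply Subtype.ext
    simp

lemma letter_bound (f : FreeGroup Bool → ℝ) (hf : Summable fun g => f g ^ 2)
    (h1 : ∑' g, f g ^ 2 = 1) (l : Bool × Bool) :
    Real.sqrt (1 - ∑' g : Al (l.1, !l.2), f g ^ 2) - Real.sqrt (∑' g : Al l, f g ^ 2)
      ≤ disp (xl l) f := by
  set x := xl l with hx
  have hshift : Summable (fun g => f (x⁻¹ * g) ^ 2) := by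
    have := (Equiv.mulLeft x⁻¹).summable_iff (f := fun g => f g ^ 2)
    exact this.mpr hf
  have hdiff : Summable (fun g => (f (x⁻¹ * g) - f g) ^ 2) := by
    apply Summable.of_nonneg_of_le (fun g => sq_nonneg _) (fun g => ?_)
      ((hshift.mul_left 2).add (hf.mul_left 2))
    nlinarith [sq_nonneg (f (x⁻¹ * g) + f g)]
  have hA : Summable (fun g : Al l => f (g : FreeGroup Bool) ^ 2) := hf.subtype _
  have hAs : Summable (fun g : Al l => f (x⁻¹ * (g : FreeGroup Bool)) ^ 2) :=
    hshift.subtype _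
  have hid : (∑' g : Al l, f (x⁻¹ * (g : FreeGroup Bool)) ^ 2)
      = 1 - ∑' g : Al (l.1, !l.2), f (g : FreeGroup Bool) ^ 2 := by
    have he := (shiftEquiv l).tsum_eq
      (fun h : ((Al (l.1, !l.2))ᶜ : Set (FreeGroup Bool)) => f (h : FreeGroup Bool) ^ 2)
    have he' : (∑' g : Al l, f (x⁻¹ * (g : FreeGroup Bool)) ^ 2)
        = ∑' h : ((Al (l.1, !l.2))ᶜ : Set (FreeGroup Bool)), f (h : FreeGroup Bool) ^ 2 := by
      rw [← he]
      rfl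
    have hc := Summable.tsum_subtype_add_tsum_subtype_compl hf (Al (l.1, !l.2))
    rw [h1] at hc
    rw [he']
    linarith
  have step1 : Real.sqrt (∑' g : Al l, (f (x⁻¹ * (g : FreeGroup Bool))
      - f (g : FreeGroup Bool)) ^ 2) ≤ disp x f := by
    simp only [disp]
    apply Real.sqrt_le_sqrt
    rw [tsum_subtype (Al l) (fun g => (f (x⁻¹ * g) - f g) ^ 2)]
    refine Summable.tsum_le_tsum (fun g => ?_) (hdiff.indicator _) hdiff
    classical
    by_cases hg : g ∈ Al l <;> simp [Set.indicator_apply, hg, sq_nonneg]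
  have step2 := rev_tri (fun g : Al l => f (x⁻¹ * (g : FreeGroup Bool)))
    (fun g : Al l => f (g : FreeGroup Bool)) hAs hA
  rw [hid] at step2
  linarith

lemma num_help {p q M : ℝ} (hpq : p ≤ 1/4) (hq2 : q ≤ 1/2)
    (hM : Real.sqrt (1 - q) - Real.sqrt p ≤ M) : 1/6 ≤ M := by
  have h1 : Real.sqrt p ≤ 1/2 := by
    have h := Real.sqrt_le_sqrt hpq
    rwa [show (1/4:ℝ) = (1/2)^2 by norm_num,
      Real.sqrt_sq (by norm_num : (0:ℝ) ≤ 1/2)] at h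
  have h2 : (2/3:ℝ) ≤ Real.sqrt (1 - q) := by
    have hm : Real.sqrt (1/2) ≤ Real.sqrt (1 - q) := Real.sqrt_le_sqrt (by linarith)
    nlinarith [Real.sq_sqrt (show (0:ℝ) ≤ 1/2 by norm_num), Real.sqrt_nonneg (1/2:ℝ)]
  linarith

end FGAux

open FGAux in
/-- The left regular representation of the free group of rank 2 is uniformly
isolated from the trivial representation. -/
theorem free_group_alpha_pos :
    ∃ ε : ℝ, 0 < ε ∧ ∀ f : FreeGroup Bool → ℝ,
      Summable (fun g => (f g) ^ 2) → ∑' g, (f g) ^ 2 = 1 →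
      ε ≤ max (disp (FreeGroup.of true) f) (disp (FreeGroup.of false) f) := by
  classical
  refine ⟨1/6, by norm_num, fun f hf h1 => ?_⟩
  have hind : ∀ l : Bool × Bool, (∑' g : Al l, f (g : FreeGroup Bool) ^ 2)
      = ∑' g, (Al l).indicator (fun g => f g ^ 2) g := fun l => tsum_subtype (Al l) (fun g => f g ^ 2)
  have hsi : ∀ l : Bool × Bool, Summable ((Al l).indicator fun g => f g ^ 2) :=
    fun l => hf.indicator _
  have hnn : ∀ l : Bool × Bool, 0 ≤ ∑' g : Al l, f (g : FreeGroup Bool) ^ 2 :=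
    fun l => tsum_nonneg fun g => sq_nonneg _
  have bound := letter_bound f hf h1
  have hsum4 : (∑' g : Al (true, true), f (g : FreeGroup Bool) ^ 2)
      + (∑' g : Al (true, false), f (g : FreeGroup Bool) ^ 2)
      + (∑' g : Al (false, true), f (g : FreeGroup Bool) ^ 2)
      + (∑' g : Al (false, false), f (g : FreeGroup Bool) ^ 2) ≤ 1 := by
    have hpt : ∀ g : FreeGroup Bool,
        (Al (true, true)).indicator (fun g => f g ^ 2) g
        + (Al (true, false)).indicator (fun g => f g ^ 2) g
        + (Al (false, true)).indicator (fun g => f g ^ 2) g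
        + (Al (false, false)).indicator (fun g => f g ^ 2) g ≤ f g ^ 2 := by
      intro g
      rcases hl : letterOf g with _ | ⟨b1, b2⟩
      · simp [Al, Set.indicator_apply, Set.mem_setOf_eq, hl, sq_nonneg (f g)]
      · cases b1 <;> cases b2 <;>
          simp [Al, Set.indicator_apply, Set.mem_setOf_eq, hl]
    have big : ∑' g, ((Al (true, true)).indicator (fun g => f g ^ 2) g
        + (Al (true, false)).indicator (fun g => f g ^ 2) g
        + (Al (false, true)).indicator (fun g => f g ^ 2) g
        + (Al (false, false)).indicator (fun g => f g ^ 2) g)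
        = (∑' g, (Al (true, true)).indicator (fun g => f g ^ 2) g)
        + (∑' g, (Al (true, false)).indicator (fun g => f g ^ 2) g)
        + (∑' g, (Al (false, true)).indicator (fun g => f g ^ 2) g)
        + (∑' g, (Al (false, false)).indicator (fun g => f g ^ 2) g) := by
      rw [Summable.tsum_add (((hsi _).add (hsi _)).add (hsi _)) (hsi _),
        Summable.tsum_add ((hsi _).add (hsi _)) (hsi _), Summable.tsum_add (hsi _) (hsi _)]
    rw [hind, hind, hind, hind, ← big]
    calc _ ≤ ∑' g, f g ^ 2 :=
          Summable.tsum_le_tsum hpt ((((hsi _).add (hsi _)).add (hsi _)).add (hsi _)) hf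
      _ = 1 := h1
  have hxuF : xl (true, false) = (FreeGroup.of true)⁻¹ := by
    rw [← FreeGroup.toWord_inj]
    simp [xl, FreeGroup.toWord_inv, FreeGroup.toWord_of, FreeGroup.invRev,
      FreeGroup.toWord_mk]
  have hxvF : xl (false, false) = (FreeGroup.of false)⁻¹ := by
    rw [← FreeGroup.toWord_inj]
    simp [xl, FreeGroup.toWord_inv, FreeGroup.toWord_of, FreeGroup.invRev,
      FreeGroup.toWord_mk]
  have hu1 : Real.sqrt (1 - ∑' g : Al (true, false), f (g : FreeGroup Bool) ^ 2)
      - Real.sqrt (∑' g : Al (true, true), f (g : FreeGroup Bool) ^ 2)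
      ≤ disp (FreeGroup.of true) f := by
    exact bound (true, true)
  have hu2 : Real.sqrt (1 - ∑' g : Al (true, true), f (g : FreeGroup Bool) ^ 2)
      - Real.sqrt (∑' g : Al (true, false), f (g : FreeGroup Bool) ^ 2)
      ≤ disp (FreeGroup.of true) f := by
    have h := bound (true, false)
    rw [hxuF, disp_inv] at h
    exact h
  have hv1 : Real.sqrt (1 - ∑' g : Al (false, false), f (g : FreeGroup Bool) ^ 2)
      - Real.sqrt (∑' g : Al (false, true), f (g : FreeGroup Bool) ^ 2)
      ≤ disp (FreeGroup.of false) f := by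
    exact bound (false, true)
  have hv2 : Real.sqrt (1 - ∑' g : Al (false, true), f (g : FreeGroup Bool) ^ 2)
      - Real.sqrt (∑' g : Al (false, false), f (g : FreeGroup Bool) ^ 2)
      ≤ disp (FreeGroup.of false) f := by
    have h := bound (false, false)
    rw [hxvF, disp_inv] at h
    exact h
  have hMu : disp (FreeGroup.of true) f
      ≤ max (disp (FreeGroup.of true) f) (disp (FreeGroup.of false) f) := le_max_left _ _
  have hMv : disp (FreeGroup.of false) f
      ≤ max (disp (FreeGroup.of true) f) (disp (FreeGroup.of false) f) := le_max_right _ _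
  have hTT := hnn (true, true)
  have hTF := hnn (true, false)
  have hFT := hnn (false, true)
  have hFF := hnn (false, false)
  by_cases hab : (∑' g : Al (true, true), f (g : FreeGroup Bool) ^ 2)
      + (∑' g : Al (true, false), f (g : FreeGroup Bool) ^ 2) ≤ 1/2
  · by_cases hA4 : (∑' g : Al (true, true), f (g : FreeGroup Bool) ^ 2) ≤ 1/4
    · exact num_help hA4 (by linarith) (hu1.trans hMu)
    · exact num_help (by linarith) (by linarith) (hu2.trans hMu)
  · have hcd : (∑' g : Al (false, true), f (g : FreeGroup Bool) ^ 2)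
        + (∑' g : Al (false, false), f (g : FreeGroup Bool) ^ 2) ≤ 1/2 := by linarith
    by_cases hC4 : (∑' g : Al (false, true), f (g : FreeGroup Bool) ^ 2) ≤ 1/4
    · exact num_help hC4 (by linarith) (hv1.trans hMv)
    · exact num_help (by linarith) (by linarith) (hv2.trans hMv)
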